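/- Let $u:\mathbb{R}\to\mathbb{R}$ be absolutely continuous with $u'\in L^2(\mathbb{R})$, and set $F_{\mathrm{ac}}(x)=\int_{-\infty}^x u'(z)^2dz$, $F_{\mathrm{ac},\infty}=\int_{\mathbb{R}}u'(z)^2dz$. For a uniform grid $x_j=j\Delta x$ and any $x\in[x_{2j},x_{2j+1}]$, one has $\left|\frac{x_{2j+2}-x}{2\Delta x}(u(x)-u(x_{2j}))+\frac{x-x_{2j}}{2\Delta x}(u(x)-u(x_{2j+2}))\right|\leq(1+\sqrt{2})\sqrt{\tfrac{F_{\mathrm{ac}}(x_{2j+2})-F_{\mathrm{ac}}(x_{2j})}{2}}\,\Delta x^{1/2}$. -/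

import Mathlib

open MeasureTheory intervalIntegral

lemma key_cs (u u' : ℝ → ℝ)
    (hu : ∀ a b : ℝ, u b - u a = ∫ z in a..b, u' z)
    (hu'sq : Integrable (fun z => (u' z)^2))
    {a b : ℝ} (hab : a ≤ b) :
    |u b - u a| ≤ Real.sqrt (b - a) * Real.sqrt (∫ z in Set.Ioc a b, (u' z)^2) := by
  set μ := volume.restrict (Set.Ioc a b) with hμ
  have hfin : IsFiniteMeasure μ := by
    constructor
    rw [hμ, Measure.restrict_apply_univ]
    exact measure_Ioc_lt_top
  set g : ℝ → ℝ := fun z => |u' z| with hg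
  have hg_meas : AEStronglyMeasurable g μ := by
    have : g = fun z => Real.sqrt ((u' z)^2) := by
      funext z; rw [hg]; simp [Real.sqrt_sq_eq_abs]
    rw [this]
    exact Real.continuous_sqrt.comp_aestronglyMeasurable hu'sq.1.restrict
  have hgsq : (fun z => g z ^ 2) = fun z => (u' z)^2 := by
    funext z; simp [hg, sq_abs]
  have hg2 : MemLp g 2 μ := by
    rw [memLp_two_iff_integrable_sq hg_meas, hgsq]
    exact hu'sq.restrict
  have hgint : Integrable g μ := hg2.integrable (by norm_num)
  have hg0 : 0 ≤ ∫ z, g z ∂μ := integral_nonneg fun z => abs_nonneg _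
  -- step 1 : |u b - u a| ≤ ∫ g
  have step1 : |u b - u a| ≤ ∫ z, g z ∂μ := by
    by_cases hI : Integrable u' μ
    · rw [hu a b]
      calc |∫ z in a..b, u' z| ≤ ∫ z in Set.Ioc a b, |u' z| := by
            have := intervalIntegral.norm_integral_le_integral_norm (f := u') (μ := volume) hab
            rwa [intervalIntegral.integral_of_le hab (f := fun z => ‖u' z‖),
              Real.norm_eq_abs] at this
            
        _ = ∫ z, g z ∂μ := rfl
    · have : u b - u a = 0 := by
        rw [hu a b, intervalIntegral.integral_of_le hab, ← hμ, integral_undef hI]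
      rw [this, abs_zero]; exact hg0
  -- step 2 : Cauchy-Schwarz
  have hpq : Real.HolderConjugate 2 2 := by constructor <;> norm_num
  have h1 : MemLp (fun _ : ℝ => (1:ℝ)) (ENNReal.ofReal 2) μ := by
    rw [show ENNReal.ofReal 2 = 2 by norm_num]
    exact memLp_const 1
  have hg2' : MemLp g (ENNReal.ofReal 2) μ := by
    rw [show ENNReal.ofReal 2 = 2 by norm_num]; exact hg2
  have step2 := integral_mul_le_Lp_mul_Lq_of_nonneg (μ := μ) hpq
    (Filter.Eventually.of_forall fun z => abs_nonneg (u' z))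
    (Filter.Eventually.of_forall fun _ => zero_le_one) hg2' h1
  have hrp : ∀ y : ℝ, y ^ (2:ℝ) = y ^ (2:ℕ) := fun y => by
    rw [show (2:ℝ) = ((2:ℕ):ℝ) by norm_num, Real.rpow_natCast]
  simp only [mul_one, hrp, one_pow] at step2
  have hone : ∫ _z, (1:ℝ) ∂μ = b - a := by
    rw [MeasureTheory.integral_const, smul_eq_mul, mul_one, hμ, measureReal_def, Measure.restrict_apply_univ,
      Real.volume_Ioc, ENNReal.toReal_ofReal (by linarith)]
  rw [hone, hgsq] at step2
  calc |u b - u a| ≤ ∫ z, g z ∂μ := step1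
    _ ≤ (∫ z, (u' z)^2 ∂μ) ^ (1/(2:ℝ)) * (b - a) ^ (1/(2:ℝ)) := step2
    _ = Real.sqrt (b - a) * Real.sqrt (∫ z in Set.Ioc a b, (u' z)^2) := by
        rw [Real.sqrt_eq_rpow, Real.sqrt_eq_rpow, mul_comm]

theorem stmt1 (u u' : ℝ → ℝ) (Δx : ℝ) (hΔx : 0 < Δx)
    (hu : ∀ a b : ℝ, u b - u a = ∫ z in a..b, u' z)
    (hu'sq : Integrable (fun z => (u' z)^2))
    (Fac : ℝ → ℝ) (hF : ∀ x, Fac x = ∫ z in Set.Iio x, (u' z)^2)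
    (j : ℤ) (x : ℝ) (hx : x ∈ Set.Icc ((2*(j:ℝ))*Δx) ((2*(j:ℝ)+1)*Δx)) :
    |((2*(j:ℝ)+2)*Δx - x)/(2*Δx) * (u x - u ((2*(j:ℝ))*Δx))
      + (x - (2*(j:ℝ))*Δx)/(2*Δx) * (u x - u ((2*(j:ℝ)+2)*Δx))|
    ≤ (1 + Real.sqrt 2) * Real.sqrt ((Fac ((2*(j:ℝ)+2)*Δx) - Fac ((2*(j:ℝ))*Δx))/2)
        * Real.sqrt Δx := by
  obtain ⟨hax, hxm⟩ := hx
  set A := (2*(j:ℝ))*Δx with hA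
  set B := (2*(j:ℝ)+2)*Δx with hB
  have hxm' : x ≤ A + Δx := by rw [hA]; linarith [hxm]
  have hBA : B = A + 2*Δx := by rw [hA, hB]; ring
  have hxB : x ≤ B := by rw [hBA]; linarith
  have hAB : A ≤ B := le_trans hax hxB
  set D := ∫ z in Set.Ioc A B, (u' z)^2 with hD
  have hD0 : 0 ≤ D := setIntegral_nonneg measurableSet_Ioc fun z _ => sq_nonneg _
  -- Fac B - Fac A = D
  have hFD : Fac B - Fac A = D := by
    rw [hF, hF, hD]
    have hsplit : Set.Iio A ∪ Set.Ico A B = Set.Iio B := Set.Iio_union_Ico_eq_Iio hAB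
    have hdisj : Disjoint (Set.Iio A) (Set.Ico A B) :=
      (Set.Iio_disjoint_Ici le_rfl).mono_right Set.Ico_subset_Ici_self
    have := MeasureTheory.setIntegral_union hdisj measurableSet_Ico
      (hu'sq.integrableOn (s := Set.Iio A)) (hu'sq.integrableOn (s := Set.Ico A B))
    rw [hsplit] at this
    rw [this, MeasureTheory.setIntegral_congr_set MeasureTheory.Ico_ae_eq_Ioc]
    ring
  -- bounds on deviations
  have hmono1 : ∫ z in Set.Ioc A x, (u' z)^2 ≤ D :=
    setIntegral_mono_set hu'sq.integrableOn (ae_of_all _ fun z => sq_nonneg _)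
      (HasSubset.Subset.eventuallyLE (Set.Ioc_subset_Ioc_right hxB))
  have hmono2 : ∫ z in Set.Ioc x B, (u' z)^2 ≤ D :=
    setIntegral_mono_set hu'sq.integrableOn (ae_of_all _ fun z => sq_nonneg _)
      (HasSubset.Subset.eventuallyLE (Set.Ioc_subset_Ioc_left hax))
  have h1 : |u x - u A| ≤ Real.sqrt Δx * Real.sqrt D := by
    refine (key_cs u u' hu hu'sq hax).trans ?_
    exact mul_le_mul (Real.sqrt_le_sqrt (by linarith)) (Real.sqrt_le_sqrt hmono1)
      (Real.sqrt_nonneg _) (Real.sqrt_nonneg _)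
  have h2 : |u x - u B| ≤ Real.sqrt (2*Δx) * Real.sqrt D := by
    rw [abs_sub_comm]
    refine (key_cs u u' hu hu'sq hxB).trans ?_
    exact mul_le_mul (Real.sqrt_le_sqrt (by linarith)) (Real.sqrt_le_sqrt hmono2)
      (Real.sqrt_nonneg _) (Real.sqrt_nonneg _)
  -- coefficients
  set l1 := (B - x)/(2*Δx) with hl1
  set l2 := (x - A)/(2*Δx) with hl2
  have h2Δ : 0 < 2*Δx := by linarith
  have hl10 : 0 ≤ l1 := div_nonneg (by linarith) (by linarith)
  have hl20 : 0 ≤ l2 := div_nonneg (by linarith) (by linarith)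
  have hl2half : l2 ≤ 1/2 := by
    rw [hl2, div_le_iff₀ h2Δ]; linarith
  have hl1sum : l1 = 1 - l2 := by
    rw [hl1, hl2]; field_simp; linarith
  -- sqrt facts
  set s := Real.sqrt 2 with hs
  have hs2 : s^2 = 2 := Real.sq_sqrt (by norm_num)
  have hs0 : 0 < s := Real.sqrt_pos.mpr (by norm_num)
  have hs1 : 1 ≤ s := by
    rw [hs, show (1:ℝ) = Real.sqrt 1 by simp]
    exact Real.sqrt_le_sqrt (by norm_num)
  have hsplit2 : Real.sqrt (2*Δx) = s * Real.sqrt Δx := Real.sqrt_mul (by norm_num) Δx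
  set P := Real.sqrt Δx * Real.sqrt D with hP
  have hP0 : 0 ≤ P := mul_nonneg (Real.sqrt_nonneg _) (Real.sqrt_nonneg _)
  have hcoef : l1 + l2 * s ≤ (1+s)/s := by
    rw [le_div_iff₀ hs0]
    have hprod : l2 * (2 - s) ≤ 1/2 := by nlinarith [hl2half, hl20, hs1]
    nlinarith [hs2, hprod, hl1sum, hs1]
  have hRHS : (1 + s) * Real.sqrt ((Fac B - Fac A)/2) * Real.sqrt Δx = ((1+s)/s) * P := by
    rw [hFD, Real.sqrt_div hD0, hP, hs]
    ring
  rw [hRHS]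
  calc |l1 * (u x - u A) + l2 * (u x - u B)|
      ≤ l1 * |u x - u A| + l2 * |u x - u B| := by
        refine (abs_add_le _ _).trans ?_
        rw [abs_mul, abs_mul, abs_of_nonneg hl10, abs_of_nonneg hl20]
    _ ≤ l1 * (Real.sqrt Δx * Real.sqrt D) + l2 * (Real.sqrt (2*Δx) * Real.sqrt D) := by
        gcongr
    _ = (l1 + l2 * s) * P := by rw [hsplit2, hP]; ring
    _ ≤ ((1+s)/s) * P := mul_le_mul_of_nonneg_right hcoef hP0
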